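/- Let p be a prime, q = p^{2r+1} an odd power of p, and let s ∈ 𝔽_q^×. Then the set {k ∈ 𝔽_q : s^p·k^{p²} = s·k} has exactly p elements. -/

import Mathlib

open Subgroup

lemma gcd_key (p r : ℕ) (hp : 2 ≤ p) :
    Nat.gcd (p ^ 2 - 1) (p ^ (2 * r + 1) - 1) = p - 1 := by
  have hp1 : 1 ≤ p := le_trans one_le_two hp
  apply Nat.dvd_antisymm
  · set g := Nat.gcd (p ^ 2 - 1) (p ^ (2 * r + 1) - 1) with hg
    have h1 : (1 : ℕ) ≡ p ^ 2 [MOD g] :=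
      (Nat.modEq_iff_dvd' (Nat.one_le_pow _ _ (by omega))).mpr (Nat.gcd_dvd_left _ _)
    have h2 : (1 : ℕ) ≡ p ^ (2 * r + 1) [MOD g] :=
      (Nat.modEq_iff_dvd' (Nat.one_le_pow _ _ (by omega))).mpr (Nat.gcd_dvd_right _ _)
    have h3 : p ^ (2 * r + 1) = (p ^ 2) ^ r * p := by
      rw [← pow_mul, ← pow_succ]
    have h4 : (1 : ℕ) ≡ p [MOD g] := by
      calc (1 : ℕ) ≡ p ^ (2 * r + 1) [MOD g] := h2
        _ = (p ^ 2) ^ r * p := h3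
        _ ≡ 1 ^ r * p [MOD g] := (Nat.ModEq.pow r h1.symm).mul_right p
        _ = p := by ring
    exact (Nat.modEq_iff_dvd' hp1).mp h4
  · refine Nat.dvd_gcd ?_ ?_ <;>
      simpa using Nat.sub_dvd_pow_sub_pow p 1 _

/-- for `q = p^(2r+1)` an odd power of a prime `p` and `s ∈ 𝔽_q^×`, the set
`{k ∈ 𝔽_q : s^p·k^(p²) = s·k}` has exactly `p` elements. -/
theorem stmt_10 (p r : ℕ) (hp : p.Prime) (F : Type*) [Field F] [Fintype F] [CharP F p]
    (hcard : Fintype.card F = p ^ (2 * r + 1)) (s : F) (hs : s ≠ 0) :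
    Nat.card {k : F // s ^ p * k ^ (p ^ 2) = s * k} = p := by
  classical
  have hp2 : 2 ≤ p := hp.two_le
  set N := p ^ (2 * r + 1) - 1 with hN
  set n := p ^ 2 - 1 with hn
  have hNcard : Fintype.card Fˣ = N := by rw [Fintype.card_units, hcard]
  have hgcd : Nat.gcd n N = p - 1 := gcd_key p r hp2
  have hdvdN : p - 1 ∣ N := by simpa using Nat.sub_dvd_pow_sub_pow p 1 (2 * r + 1)
  have hdvdn : p - 1 ∣ n := by simpa using Nat.sub_dvd_pow_sub_pow p 1 2
  have hq1 : 2 ≤ p ^ (2 * r + 1) := le_trans hp2 (Nat.le_self_pow (by omega) p)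
  have hp2' : 4 ≤ p ^ 2 := by nlinarith
  have hNpos : 0 < N := by omega
  have hppos : 0 < p - 1 := by omega
  have hnpos : 0 < n := by omega
  -- roots of unity count
  have hiff : ∀ v : Fˣ, v ^ n = 1 ↔ v ^ (p - 1) = 1 := by
    intro v
    constructor
    · intro h
      have h1 : orderOf v ∣ n := orderOf_dvd_of_pow_eq_one h
      have h2 : orderOf v ∣ N := hNcard ▸ orderOf_dvd_card
      have h3 : orderOf v ∣ p - 1 := hgcd ▸ Nat.dvd_gcd h1 h2
      exact orderOf_dvd_iff_pow_eq_one.mp h3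
    · intro h
      obtain ⟨c, hc⟩ := hdvdn
      rw [hc, pow_mul, h, one_pow]
  have hroots1 : Nat.card {v : Fˣ // v ^ (p - 1) = 1} = p - 1 := by
    rw [Nat.card_eq_fintype_card]
    apply le_antisymm
    · calc Fintype.card {v : Fˣ // v ^ (p - 1) = 1}
          = Finset.card {v : Fˣ | v ^ (p - 1) = 1} := Fintype.card_subtype _
        _ ≤ p - 1 := IsCyclic.card_pow_eq_one_le hppos
    · obtain ⟨g, hg⟩ := IsCyclic.exists_generator (α := Fˣ)
      have hgord : orderOf g = N := by
        rw [orderOf_eq_card_of_forall_mem_zpowers hg, Nat.card_eq_fintype_card, hNcard]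
      obtain ⟨c, hc⟩ := hdvdN
      have hcdvd : c ∣ N := Dvd.intro_left _ hc.symm
      have hcpos : 0 < c := Nat.pos_of_ne_zero (by rintro rfl; simp at hc; omega)
      have hordh : orderOf (g ^ c) = p - 1 := by
        rw [orderOf_pow, hgord, Nat.gcd_eq_right hcdvd, hc, Nat.mul_div_cancel _ hcpos]
      have hinj : Function.Injective
          (fun x : Subgroup.zpowers (g ^ c) =>
            (⟨(x : Fˣ), by
              have hdd := orderOf_dvd_of_mem_zpowers x.2
              rw [hordh] at hdd
              exact orderOf_dvd_iff_pow_eq_one.mp hdd⟩ :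
              {v : Fˣ // v ^ (p - 1) = 1})) := by
        intro x y hxy
        simp only [Subtype.mk.injEq] at hxy
        exact Subtype.ext hxy
      calc p - 1 = Fintype.card (Subgroup.zpowers (g ^ c)) := by
            rw [Fintype.card_zpowers, hordh]
        _ ≤ Fintype.card {v : Fˣ // v ^ (p - 1) = 1} := Fintype.card_le_of_injective _ hinj
  have hroots : Nat.card {v : Fˣ // v ^ n = 1} = p - 1 := by
    rw [← hroots1]
    exact Nat.card_congr (Equiv.subtypeEquivRight hiff)
  -- the target unit and existence of a particular solution
  set u : Fˣ := Units.mk0 s hs with hu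
  set a : Fˣ := u⁻¹ ^ (p - 1) with ha
  have hexists : ∃ x₀ : Fˣ, x₀ ^ n = a := by
    obtain ⟨x, y, hxy⟩ : ∃ x y : ℤ, ((p - 1 : ℕ) : ℤ) = n * x + N * y := by
      refine ⟨Nat.gcdA n N, Nat.gcdB n N, ?_⟩
      rw [← hgcd]; exact Nat.gcd_eq_gcd_ab n N
    refine ⟨(u⁻¹ ^ x : Fˣ), ?_⟩
    have hcardu : (u⁻¹ : Fˣ) ^ (N : ℤ) = 1 := by
      rw [zpow_natCast, ← hNcard, pow_card_eq_one]
    calc (u⁻¹ ^ x) ^ n = u⁻¹ ^ ((n : ℤ) * x) := by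
          rw [← zpow_natCast (u⁻¹ ^ x) n, ← zpow_mul, mul_comm]
      _ = u⁻¹ ^ ((n : ℤ) * x) * (u⁻¹ ^ (N : ℤ)) ^ y := by
          rw [hcardu, one_zpow, mul_one]
      _ = u⁻¹ ^ ((n : ℤ) * x + (N : ℤ) * y) := by rw [← zpow_mul, ← zpow_add]
      _ = u⁻¹ ^ ((p - 1 : ℕ) : ℤ) := by rw [← hxy]
      _ = a := by rw [zpow_natCast, ha]
  obtain ⟨x₀, hx₀⟩ := hexists
  have hT : Nat.card {v : Fˣ // v ^ n = a} = p - 1 := by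
    rw [← hroots]
    apply Nat.card_congr
    refine ⟨fun v => ⟨x₀⁻¹ * v.1, ?_⟩, fun w => ⟨x₀ * w.1, ?_⟩, ?_, ?_⟩
    · rw [mul_pow, v.2, inv_pow, hx₀, inv_mul_cancel]
    · rw [mul_pow, w.2, mul_one, hx₀]
    · intro v; ext; simp
    · intro w; ext; simp
  -- characterization at unit level
  have key : ∀ v : Fˣ, (u ^ p * v ^ (p ^ 2) = u * v) ↔ v ^ n = a := by
    intro v
    have h1 : u ^ p = u ^ (p - 1) * u := by rw [← pow_succ]; congr 1; omega
    have h2 : v ^ (p ^ 2) = v ^ n * v := by rw [← pow_succ]; congr 1; omega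
    rw [h1, h2, mul_mul_mul_comm, mul_eq_right, mul_eq_one_iff_inv_eq, ha, inv_pow,
      eq_comm]
  -- split the solution set
  have hset : {k : F | s ^ p * k ^ (p ^ 2) = s * k}
      = insert (0 : F) (Units.val '' {v : Fˣ | v ^ n = a}) := by
    ext k
    simp only [Set.mem_setOf_eq, Set.mem_insert_iff, Set.mem_image]
    constructor
    · intro hk
      rcases eq_or_ne k 0 with h0 | h0
      · exact Or.inl h0
      · refine Or.inr ⟨Units.mk0 k h0, (key (Units.mk0 k h0)).mp ?_, rfl⟩
        ext
        push_cast [hu]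
        exact hk
    · rintro (h0 | ⟨v, hv, hvk⟩)
      · subst h0
        have : (0 : F) ^ (p ^ 2) = 0 := zero_pow (by positivity)
        rw [this, mul_zero, mul_zero]
      · have := (key v).mpr hv
        have hcoe := congrArg (Units.val) this
        push_cast at hcoe
        rw [← hvk]
        simpa [hu] using hcoe
  -- conclude
  have hcount : Nat.card {k : F // s ^ p * k ^ (p ^ 2) = s * k}
      = ({k : F | s ^ p * k ^ (p ^ 2) = s * k} : Set F).ncard :=
    Nat.card_coe_set_eq _
  rw [hcount, hset, Set.ncard_insert_of_notMem, Set.ncard_image_of_injective _ (fun _ _ h => Units.ext h)]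
  · have : ({v : Fˣ | v ^ n = a} : Set Fˣ).ncard = p - 1 := by
      rw [← Nat.card_coe_set_eq]
      exact hT
    rw [this]; omega
  · rintro ⟨v, -, hv⟩
    exact v.ne_zero hv
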